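/- Let B be a d\times d complex matrix, v a vector in \mathbb{C}^d, and f(z) = \sum_{k\ge 0} a_k z^k a power series with radius of convergence greater than the operator norm \|B\|. Let c_1, ..., c_P and b_1, ..., b_P be real numbers with |c_i| \|B\| < 1 for all i, set \alpha_k = \sum_{i=1}^P b_i c_i^k, and assume \sum_{k\ge 0} |a_k - \alpha_k| \|B\|^k < \infty. If the vectors v_1, ..., v_P satisfy the linear systems (I - c_i B) v_i = v for each i, then \|f(B)v - \sum_{i=1}^P b_i v_i\| \le \left( \sum_{k=0}^{\infty} |a_k - \alpha_k| \|B\|^k \right) \|v\|. -/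

import Mathlib

open scoped Matrix.Norms.L2Operator

/-- Error bound for the fractional approximation of the action of a matrix function
on a vector: if `f(z) = ∑ a_k z^k` has radius of convergence greater than the
operator 2-norm `‖B‖`, `|c i| * ‖B‖ < 1` for all `i`, `α k = ∑ i, b i * c i ^ k`,
`∑ k, |a k - α k| ‖B‖^k < ∞`, and the vectors `w i` solve `(I - c i • B) (w i) = v`,
then `‖f(B) v - ∑ i, b i • w i‖ ≤ (∑ k, |a k - α k| ‖B‖^k) * ‖v‖` (Euclidean norms). -/
theorem matrix_vector_fractional_error_bound (d : ℕ)
    (B : Matrix (Fin d) (Fin d) ℂ) (a : ℕ → ℂ)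
    (hconv : ∃ r : ℝ, ‖B‖ < r ∧ Summable fun k : ℕ => ‖a k‖ * r ^ k)
    (P : ℕ) (c b : Fin P → ℝ)
    (hc : ∀ i, |c i| * ‖B‖ < 1)
    (α : ℕ → ℝ) (hα : ∀ k : ℕ, α k = ∑ i, b i * c i ^ k)
    (hsum : Summable fun k : ℕ => ‖a k - (α k : ℂ)‖ * ‖B‖ ^ k)
    (v : Fin d → ℂ) (w : Fin P → Fin d → ℂ)
    (hw : ∀ i, (1 - (c i : ℂ) • B).mulVec (w i) = v) :
    ‖(EuclideanSpace.equiv (Fin d) ℂ).symm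
        ((∑' k : ℕ, a k • B ^ k).mulVec v - ∑ i, (b i : ℂ) • w i)‖ ≤
      (∑' k : ℕ, ‖a k - (α k : ℂ)‖ * ‖B‖ ^ k) *
        ‖(EuclideanSpace.equiv (Fin d) ℂ).symm v‖ := by
  classical
  obtain ⟨r, hBr, hr⟩ := hconv
  have hB0 : (0:ℝ) ≤ ‖B‖ := norm_nonneg B
  -- ‖B ^ k‖ ≤ ‖B‖ ^ k
  have hpow : ∀ k : ℕ, ‖B ^ k‖ ≤ ‖B‖ ^ k := by
    intro k
    induction k with
    | zero =>
      simp only [pow_zero]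
      rw [Matrix.cstar_norm_def, map_one]
      exact ContinuousLinearMap.norm_id_le
    | succ k ih =>
      calc ‖B ^ (k+1)‖ = ‖B ^ k * B‖ := by rw [pow_succ]
        _ ≤ ‖B ^ k‖ * ‖B‖ := Matrix.l2_opNorm_mul _ _
        _ ≤ ‖B‖ ^ k * ‖B‖ := by gcongr
        _ = ‖B‖ ^ (k+1) := (pow_succ _ _).symm
  -- summability of the three matrix series
  have hsumA : Summable (fun k : ℕ => a k • B ^ k) := by
    apply Summable.of_norm_bounded hr
    intro k
    calc ‖a k • B ^ k‖ ≤ ‖a k‖ * ‖B ^ k‖ := norm_smul_le _ _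
      _ ≤ ‖a k‖ * ‖B‖ ^ k := by gcongr; exact hpow k
      _ ≤ ‖a k‖ * r ^ k :=
          mul_le_mul_of_nonneg_left (pow_le_pow_left₀ hB0 hBr.le k) (norm_nonneg _)
  have hsumD : Summable (fun k : ℕ => (a k - (α k : ℂ)) • B ^ k) := by
    apply Summable.of_norm_bounded hsum
    intro k
    calc ‖(a k - (α k : ℂ)) • B ^ k‖ ≤ ‖a k - (α k : ℂ)‖ * ‖B ^ k‖ := norm_smul_le _ _
      _ ≤ ‖a k - (α k : ℂ)‖ * ‖B‖ ^ k := by gcongr; exact hpow k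
  have hsumAl : Summable (fun k : ℕ => ((α k : ℂ)) • B ^ k) := by
    have := hsumA.sub hsumD
    apply this.congr
    intro k
    rw [← sub_smul, sub_sub_cancel]
  -- the Neumann series identities
  have hu : ∀ i, ‖(c i : ℂ) • B‖ < 1 := by
    intro i
    rw [norm_smul, Complex.norm_real, Real.norm_eq_abs]
    exact hc i
  have hgeom : ∀ i, Summable (fun k : ℕ => ((c i : ℂ) • B) ^ k) := fun i =>
    summable_geometric_of_norm_lt_one (hu i)
  have hwi : ∀ i, w i = (∑' k : ℕ, ((c i : ℂ) • B) ^ k).mulVec v := by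
    intro i
    have h1 : (∑' k : ℕ, ((c i : ℂ) • B) ^ k) * (1 - (c i : ℂ) • B) = 1 :=
      geom_series_mul_neg _ (hu i)
    calc w i = (1 : Matrix (Fin d) (Fin d) ℂ).mulVec (w i) := (Matrix.one_mulVec _).symm
      _ = ((∑' k : ℕ, ((c i : ℂ) • B) ^ k) * (1 - (c i : ℂ) • B)).mulVec (w i) := by
          rw [h1]
      _ = (∑' k : ℕ, ((c i : ℂ) • B) ^ k).mulVec ((1 - (c i : ℂ) • B).mulVec (w i)) := by
          rw [← Matrix.mulVec_mulVec]
      _ = (∑' k : ℕ, ((c i : ℂ) • B) ^ k).mulVec v := by rw [hw i]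
  -- mulVec as a linear map in the matrix argument
  let T : Matrix (Fin d) (Fin d) ℂ →ₗ[ℂ] (Fin d → ℂ) :=
    { toFun := fun A => A.mulVec v
      map_add' := fun A C => Matrix.add_mulVec A C v
      map_smul' := fun t A => (Matrix.smul_mulVec t A v) }
  -- rewrite the finite combination
  have hkey : ∑ i, (b i : ℂ) • w i = (∑' k : ℕ, ((α k : ℂ)) • B ^ k).mulVec v := by
    have : ∑ i, (b i : ℂ) • w i
        = T (∑ i, (b i : ℂ) • ∑' k : ℕ, ((c i : ℂ) • B) ^ k) := by
      rw [map_sum]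
      refine Finset.sum_congr rfl fun i _ => ?_
      rw [map_smul]
      simp only [T, LinearMap.coe_mk, AddHom.coe_mk, RingHom.id_apply]
      rw [hwi i]
    rw [this]
    have hswap : ∑ i, (b i : ℂ) • ∑' k : ℕ, ((c i : ℂ) • B) ^ k
        = ∑' k : ℕ, ∑ i, (b i : ℂ) • ((c i : ℂ) • B) ^ k := by
      rw [Summable.tsum_finsetSum (fun i _ => (hgeom i).const_smul _)]
      exact Finset.sum_congr rfl fun i _ => (Summable.tsum_const_smul _ (hgeom i)).symm
    rw [hswap]
    have heq : (∑' k : ℕ, ∑ i, (b i : ℂ) • ((c i : ℂ) • B) ^ k)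
        = ∑' k : ℕ, ((α k : ℂ)) • B ^ k := by
      refine tsum_congr fun k => ?_
      have : ∀ i : Fin P, (b i : ℂ) • ((c i : ℂ) • B) ^ k
          = ((b i * c i ^ k : ℝ) : ℂ) • B ^ k := by
        intro i
        rw [smul_pow, smul_smul]
        push_cast
        ring_nf
      rw [Finset.sum_congr rfl fun i _ => this i, ← Finset.sum_smul]
      congr 1
      rw [hα k]
      push_cast
      ring
    rw [heq]
    rfl
  -- rewrite the whole difference
  have hdiff : (∑' k : ℕ, a k • B ^ k).mulVec v - ∑ i, (b i : ℂ) • w i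
      = (∑' k : ℕ, (a k - (α k : ℂ)) • B ^ k).mulVec v := by
    have hts : (∑' k : ℕ, a k • B ^ k) - ∑' k : ℕ, ((α k : ℂ)) • B ^ k
        = ∑' k : ℕ, (a k - (α k : ℂ)) • B ^ k := by
      rw [← Summable.tsum_sub hsumA hsumAl]
      exact tsum_congr fun k => (sub_smul _ _ _).symm
    rw [hkey, ← Matrix.sub_mulVec, hts]
  rw [hdiff]
  -- final estimate
  calc ‖(EuclideanSpace.equiv (Fin d) ℂ).symm
        ((∑' k : ℕ, (a k - (α k : ℂ)) • B ^ k).mulVec v)‖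
      ≤ ‖∑' k : ℕ, (a k - (α k : ℂ)) • B ^ k‖ *
        ‖(EuclideanSpace.equiv (Fin d) ℂ).symm v‖ :=
        Matrix.l2_opNorm_mulVec _ ((EuclideanSpace.equiv (Fin d) ℂ).symm v)
    _ ≤ (∑' k : ℕ, ‖a k - (α k : ℂ)‖ * ‖B‖ ^ k) *
        ‖(EuclideanSpace.equiv (Fin d) ℂ).symm v‖ := by
        gcongr
        calc ‖∑' k : ℕ, (a k - (α k : ℂ)) • B ^ k‖
            ≤ ∑' k : ℕ, ‖(a k - (α k : ℂ)) • B ^ k‖ := norm_tsum_le_tsum_norm hsumD.norm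
          _ ≤ ∑' k : ℕ, ‖a k - (α k : ℂ)‖ * ‖B‖ ^ k := by
              refine Summable.tsum_le_tsum (fun k => ?_) hsumD.norm hsum
              calc ‖(a k - (α k : ℂ)) • B ^ k‖
                  ≤ ‖a k - (α k : ℂ)‖ * ‖B ^ k‖ := norm_smul_le _ _
                _ ≤ ‖a k - (α k : ℂ)‖ * ‖B‖ ^ k := by gcongr; exact hpow k
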